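/- Let d be a positive integer, let H : ℝ^d → ℝ be continuously differentiable, let S be a skew-symmetric d×d real matrix, and let h be a real number. If y, y' ∈ ℝ^d satisfy y' − y = h · S · ∫₀¹ ∇H(y + ξ(y' − y)) dξ, then H(y') = H(y). (The Average Vector Field scheme exactly preserves the energy integral.) -/

import Mathlib

open MeasureTheory Matrix
open scoped RealInnerProductSpace

/-- The Average Vector Field (AVF) scheme
`y' − y = h • S (∫₀¹ ∇H(y + ξ(y' − y)) dξ)`, with `S` skew-symmetric,
exactly preserves the energy integral `H`. -/
theorem avf_preserves_energy
    (d : ℕ) (hd : 0 < d)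
    (H : EuclideanSpace ℝ (Fin d) → ℝ) (hH : ContDiff ℝ 1 H)
    (S : Matrix (Fin d) (Fin d) ℝ) (hS : Sᵀ = -S)
    (h : ℝ)
    (y y' : EuclideanSpace ℝ (Fin d))
    (scheme : y' - y =
      h • (Matrix.toEuclideanLin S)
        (∫ ξ in (0:ℝ)..1, gradient H (y + ξ • (y' - y)))) :
    H y' = H y := by
  set Δ := y' - y with hΔ
  set g : ℝ → EuclideanSpace ℝ (Fin d) := fun ξ => gradient H (y + ξ • Δ) with hg
  -- continuity of the gradient along the segment
  have hgrad_cont : Continuous fun x => gradient H x := by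
    have h1 : Continuous fun x => fderiv ℝ H x := hH.continuous_fderiv one_ne_zero
    exact ((InnerProductSpace.toDual ℝ (EuclideanSpace ℝ (Fin d))).symm.continuous).comp h1
  have hgc : Continuous g := by
    apply hgrad_cont.comp
    exact continuous_const.add (continuous_id.smul continuous_const)
  -- derivative of ξ ↦ H (y + ξ • Δ)
  have hderiv : ∀ ξ ∈ Set.uIcc (0:ℝ) 1,
      HasDerivAt (fun t => H (y + t • Δ)) ⟪g ξ, Δ⟫ ξ := by
    intro ξ _
    have hγ : HasDerivAt (fun t : ℝ => y + t • Δ) Δ ξ := by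
      simpa using ((hasDerivAt_id ξ).smul_const Δ).const_add y
    have hf : HasFDerivAt H (fderiv ℝ H (y + ξ • Δ)) (y + ξ • Δ) :=
      (hH.differentiable one_ne_zero (y + ξ • Δ)).hasFDerivAt
    have := hf.comp_hasDerivAt ξ hγ
    have hinner : fderiv ℝ H (y + ξ • Δ) Δ = ⟪g ξ, Δ⟫ := by
      rw [hg]
      simp only [gradient]
      rw [← InnerProductSpace.toDual_apply_apply,
        (InnerProductSpace.toDual ℝ (EuclideanSpace ℝ (Fin d))).apply_symm_apply]
    rwa [hinner] at this
  have hint : IntervalIntegrable (fun ξ => ⟪g ξ, Δ⟫) volume 0 1 :=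
    (hgc.inner continuous_const).intervalIntegrable 0 1
  have hFTC : H (y + (1:ℝ) • Δ) - H (y + (0:ℝ) • Δ) = ∫ ξ in (0:ℝ)..1, ⟪g ξ, Δ⟫ :=
    (intervalIntegral.integral_eq_sub_of_hasDerivAt hderiv hint).symm
  set v : EuclideanSpace ℝ (Fin d) := ∫ ξ in (0:ℝ)..1, g ξ with hv
  -- pull the inner product out of the integral
  have hswap : (∫ ξ in (0:ℝ)..1, ⟪g ξ, Δ⟫) = ⟪Δ, v⟫ := by
    have : (∫ ξ in (0:ℝ)..1, ⟪g ξ, Δ⟫) = ∫ ξ in (0:ℝ)..1, (innerSL ℝ Δ) (g ξ) := by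
      simp only [innerSL_apply_apply]
      exact intervalIntegral.integral_congr fun ξ _ => real_inner_comm _ _
    rw [this, (innerSL ℝ Δ).intervalIntegral_comp_comm (hgc.intervalIntegrable 0 1)]
    simp [hv]
  -- skew-symmetry kills the quadratic form
  have hskew : ⟪(Matrix.toEuclideanLin S) v, v⟫ = 0 := by
    have hadj : LinearMap.adjoint (Matrix.toEuclideanLin S) = -(Matrix.toEuclideanLin S) := by
      rw [← Matrix.toEuclideanLin_conjTranspose_eq_adjoint]
      have : S.conjTranspose = -S := by
        rw [Matrix.conjTranspose]
        ext i j; simpa using congrFun (congrFun hS i) j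
      rw [this, map_neg]
    have h1 : ⟪(LinearMap.adjoint (Matrix.toEuclideanLin S)) v, v⟫
        = ⟪v, (Matrix.toEuclideanLin S) v⟫ := LinearMap.adjoint_inner_left _ v v
    rw [hadj] at h1
    simp only [LinearMap.neg_apply, inner_neg_left] at h1
    have h2 : ⟪v, (Matrix.toEuclideanLin S) v⟫ = ⟪(Matrix.toEuclideanLin S) v, v⟫ :=
      real_inner_comm _ _
    linarith [h1, h2]
  have hfinal : ⟪Δ, v⟫ = 0 := by
    rw [scheme]
    rw [inner_smul_left]
    simp [hskew]
  have hz : H (y + (1:ℝ) • Δ) - H (y + (0:ℝ) • Δ) = 0 := by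
    rw [hFTC, hswap, hfinal]
  have : H y' - H y = 0 := by simpa [hΔ] using hz
  linarith
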